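/- Let X_0 = {a}, X_1, ..., X_k be the similarity layers of a symmetric matrix A rooted at a. If x ∈ X_i, y ∈ X_j, z ∈ X_h with 0 ≤ i < j < h ≤ k, then A[x,z] ≤ A[x,y]. -/
import Mathlib


/-- The consecutive pairs of `l` avoid `z` with respect to the matrix `A`. -/
def AvoidChain {V : Type*} (A : V → V → ℝ) (z : V) (l : List V) : Prop :=
  l.Chain' fun u w => min (A u z) (A w z) < A u w

/-- `l` is a path from `x` to `y` avoiding `z` in `A`: a sequence of distinct
elements starting at `x`, ending at `y`, each consecutive pair avoiding `z`. -/
def AvoidPath {V : Type*} (A : V → V → ℝ) (z x y : V) (l : List V) : Prop :=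
  l.Nodup ∧ l.head? = some x ∧ l.getLast? = some y ∧ AvoidChain A z l

/-- `x ~^z y`: there is a path from `x` to `y` avoiding `z` in `A`. -/
def Avoids {V : Type*} (A : V → V → ℝ) (z x y : V) : Prop :=
  ∃ l, AvoidPath A z x y l

/-- `{x,y,z}` is a weighted asteroidal triple of `A`. -/
def IsWAT {V : Type*} (A : V → V → ℝ) (x y z : V) : Prop :=
  x ≠ y ∧ y ≠ z ∧ x ≠ z ∧ Avoids A z x y ∧ Avoids A x y z ∧ Avoids A y z x

/-- `π` is a Robinson ordering of `A`. -/
def IsRobinsonOrdering {V : Type*} [Fintype V] (A : V → V → ℝ)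
    (π : Fin (Fintype.card V) ≃ V) : Prop :=
  ∀ i j k : Fin (Fintype.card V), i < j → j < k →
    A (π i) (π k) ≤ min (A (π i) (π j)) (A (π j) (π k))

/-- `A` is Robinsonian: it admits a Robinson ordering. -/
def Robinsonian {V : Type*} [Fintype V] (A : V → V → ℝ) : Prop :=
  ∃ π : Fin (Fintype.card V) ≃ V, IsRobinsonOrdering A π

/-- `S` is strongly homogeneous for `A`. -/
def StronglyHomogeneous {V : Type*} [DecidableEq V] (A : V → V → ℝ) (S : Finset V) : Prop :=
  ∀ x ∉ S, ∀ y ∈ S, ∀ z ∈ S, A x y = A x z ∧ A x y ≤ A y z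

/-- `a` is critical for `A`: between any two distinct elements of `V \ {a}`
there is a path avoiding `a`. -/
def IsCritical {V : Type*} (A : V → V → ℝ) (a : V) : Prop :=
  ∀ x y : V, x ≠ a → y ≠ a → x ≠ y → Avoids A a x y

/-- The similarity layers of `A` rooted at `a`, together with the union of the
layers so far: `(simLayersAux A a n).1` is the `n`-th layer `X_n` and
`(simLayersAux A a n).2 = X_0 ∪ ⋯ ∪ X_n`. -/
def simLayersAux {V : Type*} (A : V → V → ℝ) (a : V) : ℕ → Set V × Set V
  | 0 => ({a}, {a})
  | n + 1 =>
    let U := (simLayersAux A a n).2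
    let L := { y | y ∉ U ∧ ∀ x ∈ U, ∀ z ∉ U, A x z ≤ A x y }
    (L, U ∪ L)

/-- The `n`-th similarity layer `X_n` of `A` rooted at `a`. -/
def simLayer {V : Type*} (A : V → V → ℝ) (a : V) (n : ℕ) : Set V :=
  (simLayersAux A a n).1


lemma simLayersAux_mono {V : Type*} (A : V → V → ℝ) (a : V) {m n : ℕ} (hmn : m ≤ n) :
    (simLayersAux A a m).2 ⊆ (simLayersAux A a n).2 := by
  induction n with
  | zero => simp_all
  | succ n ih =>
    rcases Nat.lt_or_ge m (n+1) with hlt | hge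
    · exact (ih (Nat.lt_succ_iff.mp hlt)).trans (by intro v hv; exact Or.inl hv)
    · have : m = n + 1 := le_antisymm hmn hge
      subst this; exact subset_rfl

lemma simLayer_subset_union {V : Type*} (A : V → V → ℝ) (a : V) (n : ℕ) :
    (simLayersAux A a n).1 ⊆ (simLayersAux A a n).2 := by
  cases n with
  | zero => exact subset_rfl
  | succ n => intro v hv; exact Or.inr hv

theorem stmt_9 {V : Type*} (A : V → V → ℝ)
    (hsym : ∀ u v : V, A u v = A v u) (a : V)
    (i j h : ℕ) (hij : i < j) (hjh : j < h) (x y z : V)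
    (hx : x ∈ simLayer A a i) (hy : y ∈ simLayer A a j) (hz : z ∈ simLayer A a h) :
    A x z ≤ A x y := by
  obtain ⟨m, rfl⟩ : ∃ m, j = m + 1 := ⟨j - 1, (Nat.succ_pred_eq_of_pos (by omega)).symm⟩
  obtain ⟨n, rfl⟩ : ∃ n, h = n + 1 := ⟨h - 1, (Nat.succ_pred_eq_of_pos (Nat.lt_of_le_of_lt (Nat.zero_le _) hjh)).symm⟩
  obtain ⟨hyU, hyP⟩ := hy
  have hxU : x ∈ (simLayersAux A a m).2 :=
    simLayersAux_mono A a (Nat.lt_succ_iff.mp hij) (simLayer_subset_union A a i hx)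
  have hzU : z ∉ (simLayersAux A a m).2 := fun hc =>
    hz.1 (simLayersAux_mono A a (by omega) hc)
  exact hyP x hxU z hzU
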